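/- Let p be an odd prime, φ the quadratic character of F_p^× and χ any multiplicative character of F_p^× with χ² nontrivial (characters extended by value 0 at 0). Then Σ_{s∈F_p} Σ_{t∈F_p} φ((1−t)·s·(s−1))·χ(s·t) = φ(−1)·J(φ,χ)·J(φχ,φ), where J(A,B)=Σ_{x∈F_p} A(x)B(1−x), and this quantity equals p. -/

import Mathlib

/-- For `φ` the quadratic character and `χ` with `χ²` nontrivial,
`∑_{s,t} φ((1-t)s(s-1)) χ(st) = φ(-1) J(φ,χ) J(φχ,φ)`, and this equals `p`. -/
theorem stmt14 (p : ℕ) [Fact p.Prime] (hp : p ≠ 2)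
    (φ χ : MulChar (ZMod p) ℂ) (hφ1 : φ ≠ 1) (hφ2 : φ ^ 2 = 1) (hχ : χ ^ 2 ≠ 1) :
    ((∑ s : ZMod p, ∑ t : ZMod p, φ ((1 - t) * s * (s - 1)) * χ (s * t)) =
      φ (-1) * (∑ x : ZMod p, φ x * χ (1 - x)) * (∑ x : ZMod p, (φ * χ) x * φ (1 - x))) ∧
    (∑ s : ZMod p, ∑ t : ZMod p, φ ((1 - t) * s * (s - 1)) * χ (s * t)) = p := by
  haveI : NeZero p := ⟨(Fact.out : p.Prime).ne_zero⟩
  have hχ1 : χ ≠ 1 := fun h => hχ (by rw [h, one_pow])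
  -- The first identity, by summation manipulations.
  have factor : (∑ s : ZMod p, ∑ t : ZMod p, φ ((1 - t) * s * (s - 1)) * χ (s * t)) =
      φ (-1) * (∑ x : ZMod p, φ x * χ (1 - x)) * (∑ x : ZMod p, (φ * χ) x * φ (1 - x)) := by
    have key : ∀ s t : ZMod p, φ ((1 - t) * s * (s - 1)) * χ (s * t) =
        (φ (1 - t) * χ t) * (φ (-1) * ((φ * χ) s * φ (1 - s))) := by
      intro s t
      have h1 : φ (s - 1) = φ (-1) * φ (1 - s) := by
        rw [← map_mul]; ring_nf
      rw [map_mul, map_mul, map_mul, MulChar.mul_apply, h1]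
      ring
    calc (∑ s : ZMod p, ∑ t : ZMod p, φ ((1 - t) * s * (s - 1)) * χ (s * t))
        = ∑ s : ZMod p, ∑ t : ZMod p,
            (φ (1 - t) * χ t) * (φ (-1) * ((φ * χ) s * φ (1 - s))) := by
          exact Finset.sum_congr rfl fun s _ => Finset.sum_congr rfl fun t _ => key s t
      _ = (∑ t : ZMod p, φ (1 - t) * χ t) *
            (∑ s : ZMod p, φ (-1) * ((φ * χ) s * φ (1 - s))) := by
          rw [Finset.sum_comm, Finset.sum_mul]
          refine Finset.sum_congr rfl fun t _ => ?_
          exact (Finset.mul_sum _ _ _).symm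
      _ = φ (-1) * (∑ x : ZMod p, φ x * χ (1 - x)) * (∑ x : ZMod p, (φ * χ) x * φ (1 - x)) := by
          have : (∑ t : ZMod p, φ (1 - t) * χ t) = ∑ x : ZMod p, φ x * χ (1 - x) := by
            refine Fintype.sum_equiv (Equiv.subLeft (1 : ZMod p)) _ _ fun t => ?_
            simp [Equiv.subLeft, sub_sub_cancel]
          rw [this, ← Finset.mul_sum]; ring
  refine ⟨factor, ?_⟩
  rw [factor]
  -- Now the Jacobi sum evaluation.
  have hquad : φ.IsQuadratic := by
    intro a
    by_cases ha : IsUnit a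
    · have h2 : φ a * φ a = 1 := by
        rw [← sq, ← MulChar.pow_apply' φ two_ne_zero, hφ2, MulChar.one_apply ha]
      rcases mul_self_eq_one_iff.mp h2 with h | h
      · exact Or.inr (Or.inl h)
      · exact Or.inr (Or.inr h)
    · exact Or.inl (φ.map_nonunit ha)
  have hφχ : φ * χ ≠ 1 := by
    intro h
    apply hχ
    have : χ = φ⁻¹ := eq_inv_of_mul_eq_one_left (by rwa [mul_comm] at h)
    rw [this]
    have : φ⁻¹ = φ := by
      apply inv_eq_of_mul_eq_one_left
      rw [← sq, hφ2]
    rw [this, hφ2]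
  -- primitive additive character
  set ζ : ℂ := Complex.exp (2 * Real.pi * Complex.I / p) with hζdef
  have hζ : IsPrimitiveRoot ζ p := Complex.isPrimitiveRoot_exp p (NeZero.ne p)
  set ψ : AddChar (ZMod p) ℂ :=
    AddChar.zmodChar p ((IsPrimitiveRoot.iff_def ζ p).mp hζ).left with hψdef
  have hψ : ψ.IsPrimitive := AddChar.zmodChar_primitive_of_primitive_root p hζ
  have hcard : (Fintype.card (ZMod p) : ℂ) = (p : ℂ) := by rw [ZMod.card]
  have hcard0 : (Fintype.card (ZMod p) : ℂ) ≠ 0 := by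
    rw [hcard]
    exact_mod_cast (Fact.out : p.Prime).ne_zero
  have hg1 : gaussSum (φ * χ) ψ * jacobiSum φ χ = gaussSum φ ψ * gaussSum χ ψ :=
    jacobiSum_mul_nontrivial hφχ ψ
  have hmul : φ * χ * φ = χ := by
    rw [mul_comm φ χ, mul_assoc, ← sq, hφ2, mul_one]
  have hg2 : gaussSum χ ψ * jacobiSum (φ * χ) φ = gaussSum (φ * χ) ψ * gaussSum φ ψ := by
    have := jacobiSum_mul_nontrivial (χ := φ * χ) (φ := φ) (by rwa [hmul]) ψ
    rwa [hmul] at this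
  have hgφ : gaussSum φ ψ ^ 2 = φ (-1) * p := by
    rw [gaussSum_sq hφ1 hquad hψ, hcard]
  have hgχ0 : gaussSum χ ψ ≠ 0 := gaussSum_ne_zero_of_nontrivial hcard0 hχ1 hψ
  have hgφχ0 : gaussSum (φ * χ) ψ ≠ 0 := gaussSum_ne_zero_of_nontrivial hcard0 hφχ hψ
  have hJ : jacobiSum φ χ * jacobiSum (φ * χ) φ = φ (-1) * p := by
    have h := congrArg₂ (· * ·) hg1 hg2
    have h' : gaussSum (φ * χ) ψ * gaussSum χ ψ * (jacobiSum φ χ * jacobiSum (φ * χ) φ) =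
        gaussSum (φ * χ) ψ * gaussSum χ ψ * (φ (-1) * p) := by
      rw [← hgφ]
      calc gaussSum (φ * χ) ψ * gaussSum χ ψ * (jacobiSum φ χ * jacobiSum (φ * χ) φ)
          = (gaussSum (φ * χ) ψ * jacobiSum φ χ) * (gaussSum χ ψ * jacobiSum (φ * χ) φ) := by
            ring
        _ = (gaussSum φ ψ * gaussSum χ ψ) * (gaussSum (φ * χ) ψ * gaussSum φ ψ) := by
            rw [hg1, hg2]
        _ = gaussSum (φ * χ) ψ * gaussSum χ ψ * gaussSum φ ψ ^ 2 := by ring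
    exact mul_left_cancel₀ (mul_ne_zero hgφχ0 hgχ0) h'
  have hφm1 : φ (-1) * φ (-1) = 1 := by
    rw [← sq, ← MulChar.pow_apply' φ two_ne_zero, hφ2,
      MulChar.one_apply (isUnit_one.neg : IsUnit (-1 : ZMod p))]
  have hJ1 : (∑ x : ZMod p, φ x * χ (1 - x)) = jacobiSum φ χ := rfl
  have hJ2 : (∑ x : ZMod p, (φ * χ) x * φ (1 - x)) = jacobiSum (φ * χ) φ := rfl
  rw [hJ1, hJ2, mul_assoc, hJ, ← mul_assoc, hφm1, one_mul]
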